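/- arXiv:2405.04091 — 2 statements merged into one kernel-verified Lean document; each statement's English description precedes it below -/
import Mathlib

section
/- Suppose m ≥ n, M ∈ R^{m×m} is nonsingular, σ_n(M A) > ‖M B‖₂, and A x* − B|x*| = b. Then for all x ∈ R^n, ‖x − x*‖₂ ≤ ‖M(A x − B|x| − b)‖₂ / (σ_n(M A) − ‖M B‖₂). -/
open Matrix

/-- The `i`-th largest singular value of a real matrix (0-indexed),
defined as the `i`-th entry of the decreasingly sorted list of square roots
of the eigenvalues of `Aᴴ * A`; `0` if `i` is out of range. -/
noncomputable def sv {m n : ℕ} (A : Matrix (Fin m) (Fin n) ℝ) (i : ℕ) : ℝ :=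
  ((List.ofFn fun j : Fin n =>
      Real.sqrt ((Matrix.isHermitian_conjTranspose_mul_self A).eigenvalues j)).insertionSort
    (· ≥ ·)).getD i 0

/-- Euclidean norm of a vector. -/
noncomputable def vnorm {n : ℕ} (x : Fin n → ℝ) : ℝ := Real.sqrt (∑ i, x i ^ 2)

lemma gave_dot_trans {m n : ℕ} (A : Matrix (Fin m) (Fin n) ℝ) (x : Fin n → ℝ) :
    x ⬝ᵥ ((Aᵀ * A) *ᵥ x) = (A *ᵥ x) ⬝ᵥ (A *ᵥ x) := by
  rw [← Matrix.mulVec_mulVec, Matrix.dotProduct_mulVec, Matrix.vecMul_transpose]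

lemma gave_quad_form {m n : ℕ} (A : Matrix (Fin m) (Fin n) ℝ) (x : Fin n → ℝ) :
    ∃ y : Fin n → ℝ, (∑ i, y i ^ 2 = ∑ i, x i ^ 2) ∧
      ∑ i, (A.mulVec x i) ^ 2 =
        ∑ j, (Matrix.isHermitian_conjTranspose_mul_self A).eigenvalues j * y j ^ 2 := by
  set hH := Matrix.isHermitian_conjTranspose_mul_self A with hHdef
  set U : Matrix (Fin n) (Fin n) ℝ := (hH.eigenvectorUnitary : Matrix (Fin n) (Fin n) ℝ) with hUdef
  have hU1 : U * star U = 1 := Matrix.mem_unitaryGroup_iff.mp hH.eigenvectorUnitary.2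
  have hstar : star U = Uᵀ := rfl
  have hU2 : Uᵀᵀ * Uᵀ = 1 := by rw [Matrix.transpose_transpose, ← hstar, hU1]
  refine ⟨Uᵀ *ᵥ x, ?_, ?_⟩
  · have := gave_dot_trans Uᵀ x
    rw [hU2, Matrix.one_mulVec] at this
    simpa [dotProduct, pow_two] using this.symm
  · have h1 : ∑ i, (A.mulVec x i) ^ 2 = x ⬝ᵥ ((Aᴴ * A) *ᵥ x) := by
      rw [show (Aᴴ : Matrix (Fin n) (Fin m) ℝ) = Aᵀ from rfl, gave_dot_trans]
      simp [dotProduct, pow_two]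
    have h2 : (Aᴴ * A) = U * Matrix.diagonal (RCLike.ofReal ∘ hH.eigenvalues) * star U :=
      hH.spectral_theorem
    have hx := congrArg (fun N : Matrix (Fin n) (Fin n) ℝ => x ⬝ᵥ (N *ᵥ x)) h2
    rw [h1, hx]
    rw [← Matrix.mulVec_mulVec, ← Matrix.mulVec_mulVec, Matrix.dotProduct_mulVec]
    have h3 : x ᵥ* U = Uᵀ *ᵥ x := by
      rw [← Matrix.transpose_transpose U, Matrix.vecMul_transpose, Matrix.transpose_transpose]
    rw [h3, hstar]
    simp [dotProduct, Matrix.mulVec_diagonal, pow_two, mul_assoc, mul_comm, mul_left_comm]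

lemma gave_sv_spec {m n : ℕ} (A : Matrix (Fin m) (Fin n) ℝ) (j : Fin n) :
    sv A (n - 1) ≤ Real.sqrt ((Matrix.isHermitian_conjTranspose_mul_self A).eigenvalues j) ∧
    Real.sqrt ((Matrix.isHermitian_conjTranspose_mul_self A).eigenvalues j) ≤ sv A 0 := by
  set f : Fin n → ℝ := fun j => Real.sqrt ((Matrix.isHermitian_conjTranspose_mul_self A).eigenvalues j)
    with hf
  set l' := (List.ofFn f).insertionSort (· ≥ ·) with hl'
  have hlen : l'.length = n := by
    rw [hl', (List.perm_insertionSort _ _).length_eq, List.length_ofFn]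
  have hmem : f j ∈ l' := ((List.perm_insertionSort _ _).mem_iff).2 (by
    rw [List.mem_ofFn]; exact ⟨j, rfl⟩)
  obtain ⟨k, hk⟩ := List.get_of_mem hmem
  have hsorted : l'.Pairwise (· ≥ ·) := List.pairwise_insertionSort _ _
  have hn : 0 < n := j.pos
  have h1 : n - 1 < l'.length := by omega
  have h0 : 0 < l'.length := by omega
  constructor
  · have hrel : l'.get k ≥ l'.get ⟨n - 1, h1⟩ :=
      hsorted.rel_get_of_le (by simp [Fin.le_def]; omega)
    have : sv A (n-1) = l'.get ⟨n-1, h1⟩ := by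
      rw [sv, ← hl', List.getD_eq_getElem _ _ h1]; rfl
    rw [this]; rw [hk] at hrel; exact hrel
  · have hrel : l'.get ⟨0, h0⟩ ≥ l'.get k :=
      hsorted.rel_get_of_le (by simp [Fin.le_def])
    have : sv A 0 = l'.get ⟨0, h0⟩ := by
      rw [sv, ← hl', List.getD_eq_getElem _ _ h0]; rfl
    rw [this]; rw [hk] at hrel; exact hrel

lemma gave_sv_nonneg {m n : ℕ} (A : Matrix (Fin m) (Fin n) ℝ) (i : ℕ) (hi : i < n) :
    0 ≤ sv A i := by
  set f : Fin n → ℝ := fun j => Real.sqrt ((Matrix.isHermitian_conjTranspose_mul_self A).eigenvalues j)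
    with hf
  set l' := (List.ofFn f).insertionSort (· ≥ ·) with hl'
  have hlen : l'.length = n := by
    rw [hl', (List.perm_insertionSort _ _).length_eq, List.length_ofFn]
  have hi' : i < l'.length := by omega
  have : sv A i = l'.get ⟨i, hi'⟩ := by
    rw [sv, ← hl', List.getD_eq_getElem _ _ hi']; rfl
  rw [this]
  have hmem : l'.get ⟨i, hi'⟩ ∈ l' := List.get_mem _ _
  have hmem2 : l'.get ⟨i, hi'⟩ ∈ List.ofFn f := ((List.perm_insertionSort _ _).mem_iff).1 hmem
  obtain ⟨j, hj⟩ := List.mem_ofFn.1 hmem2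
  rw [← hj]; exact Real.sqrt_nonneg _

lemma gave_vnorm_nonneg {n : ℕ} (x : Fin n → ℝ) : 0 ≤ vnorm x := Real.sqrt_nonneg _

/-- upper bound: ‖A x‖ ≤ σ₁ ‖x‖ -/
lemma gave_vnorm_mulVec_le {m n : ℕ} (A : Matrix (Fin m) (Fin n) ℝ) (hn : 0 < n)
    (x : Fin n → ℝ) : vnorm (A.mulVec x) ≤ sv A 0 * vnorm x := by
  obtain ⟨y, hy1, hy2⟩ := gave_quad_form A x
  have hsv0 : 0 ≤ sv A 0 := gave_sv_nonneg A 0 hn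
  have key : ∑ i, (A.mulVec x i) ^ 2 ≤ (sv A 0) ^ 2 * ∑ i, x i ^ 2 := by
    rw [hy2, ← hy1, Finset.mul_sum]
    apply Finset.sum_le_sum
    intro j _
    have hlam : 0 ≤ (Matrix.isHermitian_conjTranspose_mul_self A).eigenvalues j :=
      (Matrix.posSemidef_conjTranspose_mul_self A).eigenvalues_nonneg j
    have h1 : (Matrix.isHermitian_conjTranspose_mul_self A).eigenvalues j ≤ (sv A 0) ^ 2 := by
      have := (gave_sv_spec A j).2
      calc (Matrix.isHermitian_conjTranspose_mul_self A).eigenvalues j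
          = (Real.sqrt ((Matrix.isHermitian_conjTranspose_mul_self A).eigenvalues j)) ^ 2 :=
            (Real.sq_sqrt hlam).symm
        _ ≤ (sv A 0) ^ 2 := by
            apply pow_le_pow_left₀ (Real.sqrt_nonneg _) this
    exact mul_le_mul_of_nonneg_right h1 (sq_nonneg _)
  rw [vnorm, vnorm]
  calc Real.sqrt (∑ i, (A.mulVec x i) ^ 2) ≤ Real.sqrt ((sv A 0) ^ 2 * ∑ i, x i ^ 2) :=
        Real.sqrt_le_sqrt key
    _ = sv A 0 * Real.sqrt (∑ i, x i ^ 2) := by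
        rw [Real.sqrt_mul (sq_nonneg _), Real.sqrt_sq hsv0]

/-- lower bound: σₙ ‖x‖ ≤ ‖A x‖ -/
lemma gave_sv_mul_vnorm_le {m n : ℕ} (A : Matrix (Fin m) (Fin n) ℝ) (hn : 0 < n)
    (hsv : 0 ≤ sv A (n - 1)) (x : Fin n → ℝ) :
    sv A (n - 1) * vnorm x ≤ vnorm (A.mulVec x) := by
  obtain ⟨y, hy1, hy2⟩ := gave_quad_form A x
  have key : (sv A (n-1)) ^ 2 * ∑ i, x i ^ 2 ≤ ∑ i, (A.mulVec x i) ^ 2 := by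
    rw [hy2, ← hy1, Finset.mul_sum]
    apply Finset.sum_le_sum
    intro j _
    have hlam : 0 ≤ (Matrix.isHermitian_conjTranspose_mul_self A).eigenvalues j :=
      (Matrix.posSemidef_conjTranspose_mul_self A).eigenvalues_nonneg j
    have h1 : (sv A (n-1)) ^ 2 ≤ (Matrix.isHermitian_conjTranspose_mul_self A).eigenvalues j := by
      have := (gave_sv_spec A j).1
      calc (sv A (n-1)) ^ 2
          ≤ (Real.sqrt ((Matrix.isHermitian_conjTranspose_mul_self A).eigenvalues j)) ^ 2 :=
            pow_le_pow_left₀ hsv this 2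
        _ = (Matrix.isHermitian_conjTranspose_mul_self A).eigenvalues j := Real.sq_sqrt hlam
    exact mul_le_mul_of_nonneg_right h1 (sq_nonneg _)
  rw [vnorm, vnorm]
  calc sv A (n-1) * Real.sqrt (∑ i, x i ^ 2)
      = Real.sqrt ((sv A (n-1)) ^ 2 * ∑ i, x i ^ 2) := by
        rw [Real.sqrt_mul (sq_nonneg _), Real.sqrt_sq hsv]
    _ ≤ Real.sqrt (∑ i, (A.mulVec x i) ^ 2) := Real.sqrt_le_sqrt key

lemma gave_vnorm_eq_norm {n : ℕ} (x : Fin n → ℝ) :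
    vnorm x = ‖(WithLp.equiv 2 (Fin n → ℝ)).symm x‖ := by
  rw [EuclideanSpace.norm_eq, vnorm]
  congr 1
  apply Finset.sum_congr rfl
  intro i _
  rw [Real.norm_eq_abs, sq_abs]
  rfl

lemma gave_vnorm_sub_le {n : ℕ} (u v : Fin n → ℝ) : vnorm u - vnorm v ≤ vnorm (u - v) := by
  rw [gave_vnorm_eq_norm, gave_vnorm_eq_norm, gave_vnorm_eq_norm]
  have : (WithLp.equiv 2 (Fin n → ℝ)).symm (u - v)
      = (WithLp.equiv 2 (Fin n → ℝ)).symm u - (WithLp.equiv 2 (Fin n → ℝ)).symm v := rfl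
  rw [this]
  exact norm_sub_norm_le _ _

lemma gave_vnorm_mono {n : ℕ} (u v : Fin n → ℝ) (h : ∀ i, u i ^ 2 ≤ v i ^ 2) :
    vnorm u ≤ vnorm v :=
  Real.sqrt_le_sqrt (Finset.sum_le_sum fun i _ => h i)

/-- Error bound: if `m ≥ n`, `M` is nonsingular, `σ_n(M A) > ‖M B‖₂`, and `x*` solves the
GAVE, then `‖x − x*‖₂ ≤ ‖M(A x − B|x| − b)‖₂ / (σ_n(M A) − σ₁(M B))` for all `x`. -/
theorem gave_error_bound_sv {m n : ℕ} (hmn : n ≤ m) (A B : Matrix (Fin m) (Fin n) ℝ)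
    (M : Matrix (Fin m) (Fin m) ℝ) (hM : IsUnit M)
    (h : sv (M * A) (n - 1) > sv (M * B) 0) (b : Fin m → ℝ) (xs : Fin n → ℝ)
    (hxs : A.mulVec xs - B.mulVec (fun j => |xs j|) = b) :
    ∀ x : Fin n → ℝ, vnorm (x - xs) ≤
      vnorm (M.mulVec (A.mulVec x - B.mulVec (fun j => |x j|) - b)) /
        (sv (M * A) (n - 1) - sv (M * B) 0) := by
  intro x
  -- handle n = 0: then both sv are 0 and h is absurd
  rcases Nat.eq_zero_or_pos n with h0 | hn
  · exfalso
    subst h0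
    have e1 : sv (M * A) (0 - 1) = 0 := by
      rw [sv]; simp
    have e2 : sv (M * B) 0 = 0 := by
      rw [sv]; simp
    rw [e1, e2] at h
    exact lt_irrefl _ h
  set σn := sv (M * A) (n - 1) with hσn
  set σ1 := sv (M * B) 0 with hσ1
  have hσ1n : 0 ≤ σ1 := gave_sv_nonneg (M * B) 0 hn
  have hc : 0 < σn - σ1 := sub_pos.2 h
  set d : Fin n → ℝ := x - xs with hd
  set e : Fin n → ℝ := (fun j => |x j|) - (fun j => |xs j|) with he
  -- residual identity
  have hres : M.mulVec (A.mulVec x - B.mulVec (fun j => |x j|) - b)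
      = (M * A).mulVec d - (M * B).mulVec e := by
    rw [← hxs]
    have : A.mulVec x - B.mulVec (fun j => |x j|) - (A.mulVec xs - B.mulVec (fun j => |xs j|))
        = A.mulVec d - B.mulVec e := by
      rw [hd, he, Matrix.mulVec_sub, Matrix.mulVec_sub]
      abel
    rw [this, Matrix.mulVec_sub, Matrix.mulVec_mulVec, Matrix.mulVec_mulVec]
  -- norm of e is at most norm of d
  have hed : vnorm e ≤ vnorm d := by
    apply gave_vnorm_mono
    intro i
    have h1 : |e i| ≤ |d i| := by
      rw [he, hd]
      simpa [Pi.sub_apply] using abs_abs_sub_abs_le_abs_sub (x i) (xs i)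
    calc e i ^ 2 = |e i| ^ 2 := (sq_abs _).symm
      _ ≤ |d i| ^ 2 := pow_le_pow_left₀ (abs_nonneg _) h1 2
      _ = d i ^ 2 := sq_abs _
  -- main chain
  have hchain : (σn - σ1) * vnorm d
      ≤ vnorm (M.mulVec (A.mulVec x - B.mulVec (fun j => |x j|) - b)) := by
    rw [hres]
    calc (σn - σ1) * vnorm d = σn * vnorm d - σ1 * vnorm d := by ring
      _ ≤ σn * vnorm d - σ1 * vnorm e := by
          have := mul_le_mul_of_nonneg_left hed hσ1n
          linarith
      _ ≤ vnorm ((M * A).mulVec d) - vnorm ((M * B).mulVec e) := by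
          have ha := gave_sv_mul_vnorm_le (M * A) hn (le_of_lt (lt_of_le_of_lt hσ1n h)) d
          have hb := gave_vnorm_mulVec_le (M * B) hn e
          rw [← hσn] at ha
          rw [← hσ1] at hb
          linarith
      _ ≤ vnorm ((M * A).mulVec d - (M * B).mulVec e) := gave_vnorm_sub_le _ _
  rw [le_div_iff₀ hc]
  linarith [hchain]
end

section
/- Fix matrices A, B ∈ R^{m×n} with σ_n(A) > ‖B‖₂ (m ≥ n), a solution x* of A x − B|x| = b, and define the deterministic iteration x^{k+1} = x^k − A^T(A x^k − B|x^k| − b)/‖A‖₂². Then ‖x^k − x*‖₂² ≤ (1 − (σ_n(A)² − ‖B‖₂²)/‖A‖₂²)^k ‖x^0 − x*‖₂². -/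
open Matrix

/- ### Auxiliary lemmas -/

private lemma sorted_getD_ge {l : List ℝ} {a : ℝ} (ha : a ∈ l) :
    a ≤ (l.insertionSort (· ≥ ·)).getD 0 0 := by
  set s := l.insertionSort (· ≥ ·) with hs
  have hsort : s.Pairwise (· ≥ ·) := List.pairwise_insertionSort _ l
  have hmem : a ∈ s := (List.perm_insertionSort (· ≥ ·) l).mem_iff.mpr ha
  obtain ⟨i, hi, rfl⟩ := List.mem_iff_getElem.mp hmem
  rw [List.getD_eq_getElem s 0 (by omega)]
  rcases Nat.eq_zero_or_pos i with h | h
  · subst h; exact le_rfl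
  · exact hsort.rel_get_of_lt (a := ⟨0, by omega⟩) (b := ⟨i, hi⟩) (by simpa using h)

private lemma sorted_getD_le {l : List ℝ} {a : ℝ} (ha : a ∈ l) :
    (l.insertionSort (· ≥ ·)).getD (l.length - 1) 0 ≤ a := by
  set s := l.insertionSort (· ≥ ·) with hs
  have hsort : s.Pairwise (· ≥ ·) := List.pairwise_insertionSort _ l
  have hlen : s.length = l.length := (List.perm_insertionSort (· ≥ ·) l).length_eq
  have hmem : a ∈ s := (List.perm_insertionSort (· ≥ ·) l).mem_iff.mpr ha
  obtain ⟨i, hi, rfl⟩ := List.mem_iff_getElem.mp hmem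
  have hlast : l.length - 1 < s.length := by omega
  rw [List.getD_eq_getElem s 0 hlast]
  rcases eq_or_lt_of_le (Nat.le_sub_one_of_lt (hlen ▸ hi)) with h | h
  · simp [← h, hlen]
  · exact hsort.rel_get_of_lt (a := ⟨i, hi⟩) (b := ⟨l.length - 1, hlast⟩) (by simpa using hlen ▸ h)

private lemma sv_nonneg {m n : ℕ} (A : Matrix (Fin m) (Fin n) ℝ) (i : ℕ) : 0 ≤ sv A i := by
  unfold sv
  set l := List.ofFn fun j : Fin n =>
      Real.sqrt ((Matrix.isHermitian_conjTranspose_mul_self A).eigenvalues j) with hl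
  set s := l.insertionSort (· ≥ ·) with hs
  by_cases hi : i < s.length
  · rw [List.getD_eq_getElem s 0 hi]
    have : s[i] ∈ l := (List.perm_insertionSort (· ≥ ·) l).mem_iff.mp (s.getElem_mem hi)
    obtain ⟨j, hj⟩ := List.mem_ofFn.mp this
    rw [← hj]
    exact Real.sqrt_nonneg _
  · rw [List.getD_eq_default s 0 (by omega)]

private lemma sqrt_eig_le_sv_zero {m n : ℕ} (A : Matrix (Fin m) (Fin n) ℝ) (j : Fin n) :
    Real.sqrt ((Matrix.isHermitian_conjTranspose_mul_self A).eigenvalues j) ≤ sv A 0 :=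
  sorted_getD_ge (List.mem_ofFn.mpr ⟨j, rfl⟩)

private lemma sv_last_le_sqrt_eig {m n : ℕ} (A : Matrix (Fin m) (Fin n) ℝ) (j : Fin n) :
    sv A (n - 1) ≤ Real.sqrt ((Matrix.isHermitian_conjTranspose_mul_self A).eigenvalues j) := by
  have h1 := sorted_getD_le (l := List.ofFn fun j : Fin n =>
      Real.sqrt ((Matrix.isHermitian_conjTranspose_mul_self A).eigenvalues j))
      (List.mem_ofFn.mpr ⟨j, rfl⟩)
  rw [List.length_ofFn] at h1
  exact h1

private lemma eig_le_sv_zero_sq {m n : ℕ} (A : Matrix (Fin m) (Fin n) ℝ) (j : Fin n) :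
    (Matrix.isHermitian_conjTranspose_mul_self A).eigenvalues j ≤ sv A 0 ^ 2 := by
  have h0 : 0 ≤ (Matrix.isHermitian_conjTranspose_mul_self A).eigenvalues j :=
    Matrix.eigenvalues_conjTranspose_mul_self_nonneg A j
  have := sqrt_eig_le_sv_zero A j
  nlinarith [Real.sq_sqrt h0, Real.sqrt_nonneg ((Matrix.isHermitian_conjTranspose_mul_self A).eigenvalues j)]

private lemma sv_last_sq_le_eig {m n : ℕ} (A : Matrix (Fin m) (Fin n) ℝ) (j : Fin n) :
    sv A (n - 1) ^ 2 ≤ (Matrix.isHermitian_conjTranspose_mul_self A).eigenvalues j := by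
  have h0 : 0 ≤ (Matrix.isHermitian_conjTranspose_mul_self A).eigenvalues j :=
    Matrix.eigenvalues_conjTranspose_mul_self_nonneg A j
  have h1 := sv_last_le_sqrt_eig A j
  have h2 := sv_nonneg A (n - 1)
  nlinarith [Real.sq_sqrt h0]

/-- Key spectral identity: the quadratic form of `Aᵀ*A` as a weighted sum of eigenvalues. -/
private lemma quad_form_eq {n m : ℕ} (A : Matrix (Fin m) (Fin n) ℝ) (v : Fin n → ℝ) :
    ∃ y : Fin n → ℝ, (∑ i, (A.mulVec v) i ^ 2 =
        ∑ j, (Matrix.isHermitian_conjTranspose_mul_self A).eigenvalues j * y j ^ 2) ∧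
      ∑ j, y j ^ 2 = ∑ i, v i ^ 2 := by
  classical
  set hH := Matrix.isHermitian_conjTranspose_mul_self A with hHdef
  set U : Matrix (Fin n) (Fin n) ℝ := (hH.eigenvectorUnitary : Matrix (Fin n) (Fin n) ℝ) with hU
  have hstar : star U = Uᵀ := Matrix.conjTranspose_eq_transpose_of_trivial U
  have hUU : U * Uᵀ = 1 := by
    have := (Matrix.mem_unitaryGroup_iff).mp hH.eigenvectorUnitary.2
    rwa [hstar] at this
  refine ⟨Uᵀ.mulVec v, ?_, ?_⟩
  · have hsum : ∑ i, (A.mulVec v) i ^ 2 = (A.mulVec v) ⬝ᵥ (A.mulVec v) := by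
      simp [dotProduct, sq]
    have hct : Aᴴ = Aᵀ := Matrix.conjTranspose_eq_transpose_of_trivial A
    have hquad : (A.mulVec v) ⬝ᵥ (A.mulVec v) = v ⬝ᵥ (Aᴴ * A).mulVec v := by
      rw [hct, ← Matrix.mulVec_mulVec, Matrix.dotProduct_mulVec v Aᵀ, Matrix.vecMul_transpose]
    rw [hsum, hquad]
    conv_lhs => rw [hH.spectral_theorem]
    rw [Unitary.conjStarAlgAut_apply, ← hU, hstar]
    have : (U * Matrix.diagonal (RCLike.ofReal ∘ hH.eigenvalues) * Uᵀ).mulVec v =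
        U.mulVec ((Matrix.diagonal (RCLike.ofReal ∘ hH.eigenvalues)).mulVec (Uᵀ.mulVec v)) := by
      rw [Matrix.mulVec_mulVec, Matrix.mulVec_mulVec]
    rw [this, Matrix.dotProduct_mulVec v U, ← Matrix.mulVec_transpose]
    simp only [dotProduct, Matrix.mulVec_diagonal, Function.comp_apply]
    refine Finset.sum_congr rfl fun j _ => ?_
    simp [sq]
    ring
  · have : (Uᵀ.mulVec v) ⬝ᵥ (Uᵀ.mulVec v) = v ⬝ᵥ v := by
      rw [Matrix.dotProduct_mulVec (Uᵀ.mulVec v) Uᵀ, Matrix.vecMul_transpose,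
        Matrix.mulVec_mulVec, hUU, Matrix.one_mulVec]
    have h1 : ∑ j, (Uᵀ.mulVec v) j ^ 2 = (Uᵀ.mulVec v) ⬝ᵥ (Uᵀ.mulVec v) := by
      simp [dotProduct, sq]
    have h2 : ∑ i, v i ^ 2 = v ⬝ᵥ v := by simp [dotProduct, sq]
    rw [h1, h2, this]

private lemma quad_upper {n m : ℕ} (A : Matrix (Fin m) (Fin n) ℝ) (v : Fin n → ℝ) :
    ∑ i, (A.mulVec v) i ^ 2 ≤ sv A 0 ^ 2 * ∑ i, v i ^ 2 := by
  obtain ⟨y, h1, h2⟩ := quad_form_eq A v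
  rw [h1, ← h2, Finset.mul_sum]
  exact Finset.sum_le_sum fun j _ =>
    mul_le_mul_of_nonneg_right (eig_le_sv_zero_sq A j) (sq_nonneg _)

private lemma quad_lower {n m : ℕ} (A : Matrix (Fin m) (Fin n) ℝ) (v : Fin n → ℝ) :
    sv A (n - 1) ^ 2 * ∑ i, v i ^ 2 ≤ ∑ i, (A.mulVec v) i ^ 2 := by
  obtain ⟨y, h1, h2⟩ := quad_form_eq A v
  rw [h1, ← h2, Finset.mul_sum]
  exact Finset.sum_le_sum fun j _ =>
    mul_le_mul_of_nonneg_right (sv_last_sq_le_eig A j) (sq_nonneg _)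

/-- Bound for the transpose: `‖Aᵀ r‖² ≤ sv A 0 ^ 2 * ‖r‖²`. -/
private lemma quad_transpose_upper {n m : ℕ} (A : Matrix (Fin m) (Fin n) ℝ) (r : Fin m → ℝ) :
    ∑ i, (Aᵀ.mulVec r) i ^ 2 ≤ sv A 0 ^ 2 * ∑ i, r i ^ 2 := by
  set t := ∑ i, (Aᵀ.mulVec r) i ^ 2 with ht
  set s := ∑ i, r i ^ 2 with hs
  have htn : 0 ≤ t := Finset.sum_nonneg fun _ _ => sq_nonneg _
  have hsn : 0 ≤ s := Finset.sum_nonneg fun _ _ => sq_nonneg _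
  -- t = (A (Aᵀ r)) ⬝ᵥ r
  have key : t = (A.mulVec (Aᵀ.mulVec r)) ⬝ᵥ r := by
    rw [ht]
    have : (A.mulVec (Aᵀ.mulVec r)) ⬝ᵥ r = (Aᵀ.mulVec r) ⬝ᵥ (Aᵀ.mulVec r) := by
      rw [dotProduct_comm, Matrix.dotProduct_mulVec r A, Matrix.mulVec_transpose]
    rw [this]
    simp [dotProduct, sq]
  have cs : ((A.mulVec (Aᵀ.mulVec r)) ⬝ᵥ r) ^ 2 ≤
      (∑ i, (A.mulVec (Aᵀ.mulVec r)) i ^ 2) * s := by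
    simpa [dotProduct] using
      Finset.sum_mul_sq_le_sq_mul_sq Finset.univ (fun i => (A.mulVec (Aᵀ.mulVec r)) i) r
  have hAA : ∑ i, (A.mulVec (Aᵀ.mulVec r)) i ^ 2 ≤ sv A 0 ^ 2 * t := quad_upper A _
  have hsq : t ^ 2 ≤ sv A 0 ^ 2 * t * s := by
    calc t ^ 2 = ((A.mulVec (Aᵀ.mulVec r)) ⬝ᵥ r) ^ 2 := by rw [key]
    _ ≤ (∑ i, (A.mulVec (Aᵀ.mulVec r)) i ^ 2) * s := cs
    _ ≤ sv A 0 ^ 2 * t * s := mul_le_mul_of_nonneg_right hAA hsn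
  rcases eq_or_lt_of_le htn with h | h
  · rw [← h]; positivity
  · nlinarith

/-- Gradient-descent iteration for the GAVE: if `σ_n(A) > ‖B‖₂` and `x*` solves
`A x − B|x| = b`, then the iteration `x^{k+1} = x^k − Aᵀ(A x^k − B|x^k| − b)/‖A‖₂²`
satisfies `‖x^k − x*‖₂² ≤ (1 − (σ_n(A)² − ‖B‖₂²)/‖A‖₂²)^k ‖x^0 − x*‖₂²`. -/
theorem gradient_descent_convergence {m n : ℕ} (hmn : n ≤ m)
    (A B : Matrix (Fin m) (Fin n) ℝ) (h : sv A (n - 1) > sv B 0) (b : Fin m → ℝ)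
    (xs : Fin n → ℝ) (hxs : A.mulVec xs - B.mulVec (fun j => |xs j|) = b)
    (x : ℕ → Fin n → ℝ)
    (hiter : ∀ k, x (k + 1) = x k -
      (sv A 0 ^ 2)⁻¹ • Aᵀ.mulVec (A.mulVec (x k) - B.mulVec (fun j => |x k j|) - b)) :
    ∀ k, vnorm (x k - xs) ^ 2 ≤
      (1 - (sv A (n - 1) ^ 2 - sv B 0 ^ 2) / sv A 0 ^ 2) ^ k * vnorm (x 0 - xs) ^ 2 := by
  classical
  -- basic notation
  set sa := sv A 0 with hsa
  set sn := sv A (n - 1) with hsn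
  set sb := sv B 0 with hsb
  have hn : 1 ≤ n := by
    by_contra hn
    have hn0 : n = 0 := by omega
    subst hn0
    have h1 : sn = 0 := by simp [hsn, sv]
    have h2 : sb = 0 := by simp [hsb, sv]
    rw [h1, h2] at h; exact lt_irrefl 0 h
  have hsb0 : 0 ≤ sb := sv_nonneg B 0
  have hsn0 : 0 < sn := lt_of_le_of_lt hsb0 h
  have hsna : sn ≤ sa := by
    have j : Fin n := ⟨0, by omega⟩
    exact (sv_last_le_sqrt_eig A j).trans (sqrt_eig_le_sv_zero A j)
  have hsa0 : 0 < sa := lt_of_lt_of_le hsn0 hsna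
  have hsa2 : (0:ℝ) < sa ^ 2 := by positivity
  set ρ := 1 - (sn ^ 2 - sb ^ 2) / sa ^ 2 with hρ
  have hρ0 : 0 ≤ ρ := by
    have : sn ^ 2 - sb ^ 2 ≤ sa ^ 2 := by nlinarith
    rw [hρ]
    have := div_le_one_of_le₀ this hsa2.le
    linarith
  -- nsq notation
  have vnorm_sq : ∀ (v : Fin n → ℝ), vnorm v ^ 2 = ∑ i, v i ^ 2 := fun v =>
    Real.sq_sqrt (Finset.sum_nonneg fun _ _ => sq_nonneg _)
  -- per-step contraction
  have step : ∀ k, ∑ i, (x (k+1) - xs) i ^ 2 ≤ ρ * ∑ i, (x k - xs) i ^ 2 := by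
    intro k
    set e : Fin n → ℝ := x k - xs with he
    set d : Fin n → ℝ := fun j => |x k j| - |xs j| with hd
    set r : Fin m → ℝ := A.mulVec e - B.mulVec d with hr
    have hres : A.mulVec (x k) - B.mulVec (fun j => |x k j|) - b = r := by
      rw [← hxs, hr, he, hd]
      have h1 : A.mulVec (x k - xs) = A.mulVec (x k) - A.mulVec xs := by
        rw [Matrix.mulVec_sub]
      have h2 : B.mulVec (fun j => |x k j| - |xs j|) =
          B.mulVec (fun j => |x k j|) - B.mulVec (fun j => |xs j|) := by
        rw [← Matrix.mulVec_sub]; rfl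
      rw [h1, h2]
      funext i
      simp only [Pi.sub_apply]
      ring
    have hx1 : x (k+1) - xs = e - (sa ^ 2)⁻¹ • Aᵀ.mulVec r := by
      rw [hiter k, hres, he]
      funext i; simp only [Pi.sub_apply, Pi.smul_apply, smul_eq_mul]; ring
    -- expand the square
    have expand : ∑ i, (x (k+1) - xs) i ^ 2 =
        ∑ i, e i ^ 2 - 2 * (sa ^ 2)⁻¹ * ∑ i, e i * (Aᵀ.mulVec r) i
          + (sa ^ 2)⁻¹ ^ 2 * ∑ i, (Aᵀ.mulVec r) i ^ 2 := by
      rw [hx1]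
      rw [Finset.mul_sum, Finset.mul_sum, ← Finset.sum_sub_distrib, ← Finset.sum_add_distrib]
      refine Finset.sum_congr rfl fun i _ => ?_
      simp only [Pi.sub_apply, Pi.smul_apply, smul_eq_mul]
      ring
    -- inner product identity : ⟨e, Aᵀ r⟩ = ⟨A e, r⟩
    have hinner : ∑ i, e i * (Aᵀ.mulVec r) i = (A.mulVec e) ⬝ᵥ r := by
      have : ∑ i, e i * (Aᵀ.mulVec r) i = e ⬝ᵥ (Aᵀ.mulVec r) := by
        simp [dotProduct]
      rw [this, Matrix.dotProduct_mulVec e Aᵀ, Matrix.vecMul_transpose]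
    -- expansion of ⟨Ae, r⟩ and ‖r‖²
    have hAer : (A.mulVec e) ⬝ᵥ r =
        ∑ i, (A.mulVec e) i ^ 2 - (A.mulVec e) ⬝ᵥ (B.mulVec d) := by
      rw [hr]
      rw [dotProduct_sub]
      congr 1
      simp [dotProduct, sq]
    have hrsq : ∑ i, r i ^ 2 =
        ∑ i, (A.mulVec e) i ^ 2 - 2 * ((A.mulVec e) ⬝ᵥ (B.mulVec d))
          + ∑ i, (B.mulVec d) i ^ 2 := by
      rw [hr]
      simp only [dotProduct, Finset.mul_sum]
      rw [← Finset.sum_sub_distrib, ← Finset.sum_add_distrib]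
      refine Finset.sum_congr rfl fun i _ => ?_
      simp only [Pi.sub_apply]
      ring
    -- ‖Aᵀ r‖² ≤ sa² ‖r‖²
    have hAt := quad_transpose_upper A r
    -- combine
    have main : ∑ i, (x (k+1) - xs) i ^ 2 ≤
        ∑ i, e i ^ 2 + (sa ^ 2)⁻¹ * (∑ i, (B.mulVec d) i ^ 2 - ∑ i, (A.mulVec e) i ^ 2) := by
      rw [expand, hinner, hAer]
      have h1 : (sa ^ 2)⁻¹ ^ 2 * ∑ i, (Aᵀ.mulVec r) i ^ 2 ≤ (sa ^ 2)⁻¹ * ∑ i, r i ^ 2 := by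
        have : (sa ^ 2)⁻¹ ^ 2 * ∑ i, (Aᵀ.mulVec r) i ^ 2 ≤
            (sa ^ 2)⁻¹ ^ 2 * (sa ^ 2 * ∑ i, r i ^ 2) :=
          mul_le_mul_of_nonneg_left hAt (by positivity)
        calc (sa ^ 2)⁻¹ ^ 2 * ∑ i, (Aᵀ.mulVec r) i ^ 2 ≤
            (sa ^ 2)⁻¹ ^ 2 * (sa ^ 2 * ∑ i, r i ^ 2) := this
        _ = (sa ^ 2)⁻¹ * ∑ i, r i ^ 2 := by field_simp
      have heq : ∑ i, e i ^ 2 - 2 * (sa ^ 2)⁻¹ * (∑ i, (A.mulVec e) i ^ 2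
            - (A.mulVec e) ⬝ᵥ (B.mulVec d)) + (sa ^ 2)⁻¹ * ∑ i, r i ^ 2 =
          ∑ i, e i ^ 2 + (sa ^ 2)⁻¹ * (∑ i, (B.mulVec d) i ^ 2 - ∑ i, (A.mulVec e) i ^ 2) := by
        rw [hrsq]; ring
      linarith [h1, heq]
    -- bound ‖Bd‖² ≤ sb² ‖d‖² ≤ sb² ‖e‖²
    have hd_le : ∑ i, d i ^ 2 ≤ ∑ i, e i ^ 2 := by
      refine Finset.sum_le_sum fun i _ => ?_
      have h1 : |d i| ≤ |e i| := by
        rw [hd, he]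
        simpa using abs_abs_sub_abs_le_abs_sub (x k i) (xs i)
      calc d i ^ 2 = |d i| ^ 2 := (sq_abs _).symm
      _ ≤ |e i| ^ 2 := by nlinarith [abs_nonneg (d i), abs_nonneg (e i)]
      _ = e i ^ 2 := sq_abs _
    have hB := quad_upper B d
    have hBd : ∑ i, (B.mulVec d) i ^ 2 ≤ sb ^ 2 * ∑ i, e i ^ 2 := by
      calc ∑ i, (B.mulVec d) i ^ 2 ≤ sb ^ 2 * ∑ i, d i ^ 2 := hB
      _ ≤ sb ^ 2 * ∑ i, e i ^ 2 := mul_le_mul_of_nonneg_left hd_le (by positivity)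
    have hAe := quad_lower A e
    calc ∑ i, (x (k+1) - xs) i ^ 2 ≤
        ∑ i, e i ^ 2 + (sa ^ 2)⁻¹ * (∑ i, (B.mulVec d) i ^ 2 - ∑ i, (A.mulVec e) i ^ 2) := main
    _ ≤ ∑ i, e i ^ 2 + (sa ^ 2)⁻¹ * (sb ^ 2 * ∑ i, e i ^ 2 - sn ^ 2 * ∑ i, e i ^ 2) := by
        have : ∑ i, (B.mulVec d) i ^ 2 - ∑ i, (A.mulVec e) i ^ 2 ≤
            sb ^ 2 * ∑ i, e i ^ 2 - sn ^ 2 * ∑ i, e i ^ 2 := by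
          have := hAe; linarith
        have h' := mul_le_mul_of_nonneg_left this (le_of_lt (by positivity : (0:ℝ) < (sa ^ 2)⁻¹))
        linarith
    _ = ρ * ∑ i, e i ^ 2 := by rw [hρ]; field_simp; ring
  -- induction
  intro k
  induction k with
  | zero => simp
  | succ k ih =>
    simp only [vnorm_sq] at ih ⊢
    calc ∑ i, (x (k+1) - xs) i ^ 2 ≤ ρ * ∑ i, (x k - xs) i ^ 2 := step k
    _ ≤ ρ * (ρ ^ k * ∑ i, (x 0 - xs) i ^ 2) := mul_le_mul_of_nonneg_left ih hρ0
    _ = ρ ^ (k+1) * ∑ i, (x 0 - xs) i ^ 2 := by ring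
end
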